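/- Let X be a compact Hausdorff space. The max-min measures of finite support are dense in J(X): for every max-min measure μ on X, every φ₁,…,φₖ ∈ C(X) and every ε > 0, there exist n ∈ ℕ, points x₁,…,xₙ ∈ X and λ₁,…,λₙ ∈ ℝ ∪ {+∞} with maxᵢ λᵢ = +∞ such that |μ(φⱼ) - maxᵢ min(λᵢ, φⱼ(xᵢ))| < ε for every j = 1,…,k. -/

import Mathlib

def IsMaxMinMeasure {X : Type*} [TopologicalSpace X] (μ : C(X, ℝ) → ℝ) : Prop :=
  (∀ c : ℝ, μ (ContinuousMap.const X c) = c) ∧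
  (∀ φ ψ : C(X, ℝ), μ (φ ⊔ ψ) = max (μ φ) (μ ψ)) ∧
  (∀ (c : ℝ) (φ : C(X, ℝ)), μ (ContinuousMap.const X c ⊓ φ) = min c (μ φ))

section Aux

variable {X : Type*} [TopologicalSpace X] {μ : C(X, ℝ) → ℝ}

lemma mmm_mono (hμ : IsMaxMinMeasure μ) {φ ψ : C(X, ℝ)} (h : φ ≤ ψ) : μ φ ≤ μ ψ := by
  have h2 := hμ.2.1 φ ψ
  rw [sup_eq_right.mpr h] at h2
  rw [h2]
  exact le_max_left _ _

lemma mmm_nonempty (hμ : IsMaxMinMeasure μ) : Nonempty X := by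
  by_contra h
  have he : (ContinuousMap.const X (0:ℝ)) = ContinuousMap.const X 1 := by
    ext x
    exact absurd ⟨x⟩ h
  have h0 := hμ.1 0
  have h1 := hμ.1 1
  rw [he] at h0
  linarith

lemma mmm_heart (hμ : IsMaxMinMeasure μ) (θ φ : C(X, ℝ)) (β c : ℝ)
    (hβc : β < c) (hac : μ φ < c) (hcov : ∀ x, β ≤ θ x → c ≤ φ x) :
    μ θ ≤ max β (μ φ) := by
  by_contra hcon
  push_neg at hcon
  set s := μ θ with hs
  set t := min c s with ht
  have hts : t ≤ s := min_le_right _ _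
  have htβ : β < t := lt_min hβc ((le_max_left _ _).trans_lt hcon)
  have hta : μ φ < t := lt_min hac ((le_max_right _ _).trans_lt hcon)
  have hg : μ ((ContinuousMap.const X t ⊓ θ) ⊔ φ) = t := by
    rw [hμ.2.1, hμ.2.2, min_eq_left hts, max_eq_left hta.le]
  have hle : (ContinuousMap.const X t ⊓ θ) ⊔ φ ≤ ContinuousMap.const X β ⊔ φ := by
    rw [ContinuousMap.le_def]
    intro x
    simp only [ContinuousMap.sup_apply, ContinuousMap.inf_apply, ContinuousMap.const_apply]
    rcases le_or_gt β (θ x) with h | h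
    · have hc := hcov x h
      have hmt : min t (θ x) ≤ φ x := (min_le_left _ _).trans ((min_le_left _ _).trans hc)
      exact max_le (hmt.trans (le_max_right _ _)) (le_max_right _ _)
    · exact max_le (((min_le_right _ _).trans h.le).trans (le_max_left _ _)) (le_max_right _ _)
  have hfin := mmm_mono hμ hle
  rw [hg, hμ.2.1, hμ.1] at hfin
  exact absurd hfin (not_le.mpr (max_lt htβ hta))

lemma mmm_le_max [CompactSpace X] (hμ : IsMaxMinMeasure μ) (θ : C(X, ℝ)) :
    ∃ x₀, μ θ ≤ θ x₀ := by
  have hne : Nonempty X := mmm_nonempty hμ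
  obtain ⟨x₀, -, hx₀⟩ := isCompact_univ.exists_isMaxOn Set.univ_nonempty
    θ.continuous.continuousOn
  refine ⟨x₀, ?_⟩
  have hle : θ ≤ ContinuousMap.const X (θ x₀) :=
    ContinuousMap.le_def.mpr fun x => hx₀ (Set.mem_univ x)
  exact (mmm_mono hμ hle).trans_eq (hμ.1 _)

lemma urysohn_scaled [CompactSpace X] [T2Space X] {A B : Set X} (hA : IsClosed A)
    (hB : IsClosed B) (hd : Disjoint A B) (b T : ℝ) (hbT : b ≤ T) :
    ∃ v : C(X, ℝ), (∀ x ∈ A, v x = b) ∧ (∀ x ∈ B, v x = T) ∧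
      (∀ x, b ≤ v x) ∧ (∀ x, v x ≤ T) := by
  obtain ⟨f, hf0, hf1, hf01⟩ := exists_continuous_zero_one_of_isClosed hA hB hd
  refine ⟨ContinuousMap.const X b + ContinuousMap.const X (T - b) * f, ?_, ?_, ?_, ?_⟩
  · intro x hx
    have := hf0 hx
    simp only [ContinuousMap.add_apply, ContinuousMap.mul_apply, ContinuousMap.const_apply]
    rw [this]
    simp
  · intro x hx
    have := hf1 hx
    simp only [ContinuousMap.add_apply, ContinuousMap.mul_apply, ContinuousMap.const_apply]
    rw [this]
    simp
  · intro x
    have h01 := hf01 x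
    simp only [Set.mem_Icc] at h01
    simp only [ContinuousMap.add_apply, ContinuousMap.mul_apply, ContinuousMap.const_apply]
    nlinarith [h01.1, h01.2]
  · intro x
    have h01 := hf01 x
    simp only [Set.mem_Icc] at h01
    simp only [ContinuousMap.add_apply, ContinuousMap.mul_apply, ContinuousMap.const_apply]
    nlinarith [h01.1, h01.2]

lemma mmm_ML [CompactSpace X] [T2Space X] (hμ : IsMaxMinMeasure μ) {ι : Type*}
    (S : Finset ι) (φ : ι → C(X, ℝ)) (θ : C(X, ℝ)) (β Rb δ : ℝ) (hδ : 0 < δ)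
    (hRb : ∀ j ∈ S, μ (φ j) + δ ≤ Rb)
    (hcov : ∀ x, β ≤ θ x → ∃ j ∈ S, μ (φ j) + 2 * δ ≤ φ j x) :
    μ θ ≤ max β Rb := by
  rcases S.eq_empty_or_nonempty with hS | hS
  · obtain ⟨x₀, hx₀⟩ := mmm_le_max hμ θ
    rcases le_or_gt β (θ x₀) with h | h
    · obtain ⟨j, hj, -⟩ := hcov x₀ h
      simp [hS] at hj
    · exact (hx₀.trans h.le).trans (le_max_left _ _)
  · set T := max β Rb + δ with hT
    have hv : ∀ j ∈ S, ∃ v : C(X, ℝ),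
        (∀ x, φ j x ≤ μ (φ j) + δ → v x = μ (φ j) + δ/2) ∧
        (∀ x, μ (φ j) + 2*δ ≤ φ j x → v x = T) ∧
        (∀ x, μ (φ j) + δ/2 ≤ v x) ∧ (∀ x, v x ≤ T) := by
      intro j hj
      obtain ⟨v, hvA, hvB, h1, h2⟩ := urysohn_scaled
        (A := {x | φ j x ≤ μ (φ j) + δ}) (B := {x | μ (φ j) + 2*δ ≤ φ j x})
        (isClosed_le (map_continuous (φ j)) continuous_const)
        (isClosed_le continuous_const (map_continuous (φ j)))
        (Set.disjoint_left.mpr fun x hx hx2 => by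
          simp only [Set.mem_setOf_eq] at hx hx2
          linarith)
        (μ (φ j) + δ/2) T
        (by
          have h := hRb j hj
          have h2 := le_max_right β Rb
          rw [hT]
          linarith)
      exact ⟨v, fun x hx => hvA x hx, fun x hx => hvB x hx, h1, h2⟩
    choose v hvC hvK hvb hvT using hv
    have hSa : (S.attach).Nonempty := by simpa using hS
    set V := S.attach.sup' hSa (fun j => v j.1 j.2) with hV
    have hμV : μ V ≤ Rb := by
      rw [hV, Finset.comp_sup'_eq_sup'_comp _ μ (fun a b => hμ.2.1 a b)]
      refine Finset.sup'_le _ _ fun j _ => ?_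
      have hh := mmm_heart hμ (v j.1 j.2) (φ j.1) (μ (φ j.1) + 3*δ/4) (μ (φ j.1) + δ)
        (by linarith) (by linarith)
        (fun x hx => by
          by_contra hc
          push_neg at hc
          have he := hvC j.1 j.2 x hc.le
          rw [he] at hx
          linarith)
      have hRbj := hRb j.1 j.2
      calc μ ((fun j : {a // a ∈ S} => v j.1 j.2) j)
          ≤ max (μ (φ j.1) + 3*δ/4) (μ (φ j.1)) := hh
        _ ≤ Rb := by rw [max_eq_left (by linarith)]; linarith
    have hh2 := mmm_heart hμ θ V β T
      (by rw [hT]; have := le_max_left β Rb; linarith)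
      (by rw [hT]; have := le_max_right β Rb; linarith)
      (fun x hx => by
        obtain ⟨j, hj, hjx⟩ := hcov x hx
        have happ : V x = S.attach.sup' hSa (fun j => v j.1 j.2 x) := by
          rw [hV, Finset.comp_sup'_eq_sup'_comp _ (fun f : C(X, ℝ) => f x)
            (fun a b => ContinuousMap.sup_apply a b x)]
          rfl
        rw [happ]
        have hle := Finset.le_sup' (fun j : {a // a ∈ S} => v j.1 j.2 x)
          (Finset.mem_attach S ⟨j, hj⟩)
        rw [hvK j hj x hjx] at hle
        exact hle)
    calc μ θ ≤ max β (μ V) := hh2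
      _ ≤ max β Rb := max_le_max le_rfl hμV

end Aux

/-- the max-min measures of finite support are weak*-dense in `J(X)`:
every basic weak* neighbourhood `O(μ; φ₁, …, φₖ; ε)` of a max-min measure `μ`
contains a finitely supported max-min measure `φ ↦ maxᵢ min (λᵢ) (φ (xᵢ))` with
`λᵢ ∈ ℝ ∪ {+∞}` and `maxᵢ λᵢ = +∞`. -/
theorem maxMinMeasure_finiteSupport_dense
    {X : Type*} [TopologicalSpace X] [CompactSpace X] [T2Space X]
    (μ : C(X, ℝ) → ℝ) (hμ : IsMaxMinMeasure μ)
    (k : ℕ) (φ : Fin k → C(X, ℝ)) (ε : ℝ) (hε : 0 < ε) :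
    ∃ (n : ℕ) (x : Fin n → X) (lam : Fin n → EReal),
      (∀ i, lam i ≠ ⊥) ∧ (∃ i, lam i = ⊤) ∧
      ∀ j, |μ (φ j) - (⨆ i, min (lam i) ((φ j (x i) : ℝ) : EReal)).toReal| < ε := by
  have hne : Nonempty X := mmm_nonempty hμ
  rcases Nat.eq_zero_or_pos k with hk | hk
  · refine ⟨1, fun _ => Classical.arbitrary X, fun _ => ⊤, fun i => by simp, ⟨0, rfl⟩, ?_⟩
    intro j
    exact absurd j.isLt (by omega)
  · haveI : Nonempty (Fin k) := Fin.pos_iff_nonempty.mp hk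
    set δ : ℝ := ε / 4 with hδdef
    have hδ : 0 < δ := by positivity
    -- the "top" point
    have hsw : ∃ x : X, ∀ j, φ j x ≤ μ (φ j) + 2*δ := by
      by_contra hc
      push_neg at hc
      have hk' : (Finset.univ : Finset (Fin k)).Nonempty := Finset.univ_nonempty
      set Rb := Finset.univ.sup' hk' (fun j => μ (φ j) + δ) with hRbdef
      have hml := mmm_ML hμ Finset.univ φ (ContinuousMap.const X (Rb + 1)) Rb Rb δ hδ
        (fun j _ => by
          rw [hRbdef]
          exact Finset.le_sup' (fun j => μ (φ j) + δ) (Finset.mem_univ j))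
        (fun x _ => by
          obtain ⟨j, hj⟩ := hc x
          exact ⟨j, Finset.mem_univ j, by linarith⟩)
      rw [hμ.1] at hml
      simp at hml
      linarith
    -- the support points
    have hbw : ∀ j₀ : Fin k, ∃ x : X, μ (φ j₀) - δ ≤ φ j₀ x ∧
        ∀ j' : Fin k, μ (φ j') + 3*δ ≤ μ (φ j₀) → φ j' x ≤ μ (φ j') + 2*δ := by
      intro j₀
      by_contra hc
      push_neg at hc
      classical
      have hml := mmm_ML hμ (Finset.univ.filter fun j' => μ (φ j') + 3*δ ≤ μ (φ j₀)) φ (φ j₀)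
        (μ (φ j₀) - δ) (μ (φ j₀) - 2*δ) δ hδ
        (fun j hj => by
          have := (Finset.mem_filter.mp hj).2
          linarith)
        (fun x hx => by
          obtain ⟨j', hj1, hj2⟩ := hc x hx
          exact ⟨j', Finset.mem_filter.mpr ⟨Finset.mem_univ j', hj1⟩, by linarith⟩)
      have hmax : max (μ (φ j₀) - δ) (μ (φ j₀) - 2*δ) ≤ μ (φ j₀) - δ := max_le le_rfl (by linarith)
      have : μ (φ j₀) ≤ μ (φ j₀) - δ := hml.trans hmax
      linarith
    choose xb hxb1 hxb2 using hbw
    obtain ⟨xs, hxs⟩ := hsw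
    refine ⟨k+1, Fin.snoc xb xs, Fin.snoc (fun j => ((μ (φ j) : ℝ) : EReal)) ⊤, ?_, ?_, ?_⟩
    · intro i
      refine Fin.lastCases ?_ (fun i => ?_) i
      · simp
      · simp
    · exact ⟨Fin.last k, by simp⟩
    · intro j
      set Sj := ⨆ i : Fin (k+1),
        min ((Fin.snoc (fun j => ((μ (φ j) : ℝ) : EReal)) ⊤ : Fin (k+1) → EReal) i)
          (((φ j) ((Fin.snoc xb xs : Fin (k+1) → X) i) : ℝ) : EReal) with hSj
      have hlow : ((μ (φ j) - δ : ℝ) : EReal) ≤ Sj := by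
        refine le_trans ?_ (le_iSup _ (Fin.castSucc j))
        rw [Fin.snoc_castSucc, Fin.snoc_castSucc]
        refine le_min ?_ ?_
        · exact EReal.coe_le_coe_iff.mpr (by linarith)
        · exact EReal.coe_le_coe_iff.mpr (hxb1 j)
      have hup : Sj ≤ ((μ (φ j) + 3*δ : ℝ) : EReal) := by
        refine iSup_le fun i => ?_
        refine Fin.lastCases ?_ (fun i => ?_) i
        · rw [Fin.snoc_last, Fin.snoc_last, min_eq_right le_top]
          exact EReal.coe_le_coe_iff.mpr (by have := hxs j; linarith)
        · rw [Fin.snoc_castSucc, Fin.snoc_castSucc]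
          rcases le_or_gt (μ (φ j) + 3*δ) (μ (φ i)) with h | h
          · exact (min_le_right _ _).trans
              (EReal.coe_le_coe_iff.mpr (by have := hxb2 i j h; linarith))
          · exact (min_le_left _ _).trans (EReal.coe_le_coe_iff.mpr h.le)
      have hnb : Sj ≠ ⊥ := by
        intro h
        rw [h, le_bot_iff] at hlow
        exact EReal.coe_ne_bot _ hlow
      have hnt : Sj ≠ ⊤ := by
        intro h
        rw [h, top_le_iff] at hup
        exact EReal.coe_ne_top _ hup
      have h1 : μ (φ j) - δ ≤ Sj.toReal := by
        have := EReal.toReal_le_toReal hlow (EReal.coe_ne_bot _) hnt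
        rwa [EReal.toReal_coe] at this
      have h2 : Sj.toReal ≤ μ (φ j) + 3*δ := by
        have := EReal.toReal_le_toReal hup hnb (EReal.coe_ne_top _)
        rwa [EReal.toReal_coe] at this
      rw [abs_sub_lt_iff]
      constructor <;> [skip; skip] <;> linarith
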